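/- For every integer b ≥ 0, there is no leader election algorithm using advice of size at most b that succeeds on all feasible port-numbered graphs, regardless of the allocated time. Precisely: there do not exist an oracle A assigning to every feasible port-numbered graph G a binary advice string with |A(G)| ≤ b, and a function f mapping pairs (binary string, augmented truncated view) to either the symbol ⊥ (meaning 'continue') or a finite sequence of port numbers, such that for every feasible port-numbered graph G: (i) for every node v of G there exists a smallest integer t_v ≥ 0 with f(A(G), B^{t_v}(v)) ≠ ⊥, and (ii) the assignment v ↦ f(A(G), B^{t_v}(v)) is a leader election output for G. -/

import Mathlib

namespace Election

/-- A port-numbered graph: a simple undirected connected graph on `n ≥ 3` unlabeled nodes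
(vertex set `Fin n`) in which, at each node `v` of degree `d`, the edges incident to `v`
carry distinct port numbers `0, …, d-1` at `v`. `portNum v u` is the port number at `v`
of the edge `{v, u}` (meaningful only when `v` and `u` are adjacent). -/
structure PortGraph where
  n : ℕ
  three_le : 3 ≤ n
  G : SimpleGraph (Fin n)
  conn : G.Connected
  portNum : Fin n → Fin n → ℕ
  port_lt : ∀ v u : Fin n, G.Adj v u → portNum v u < Nat.card {w : Fin n // G.Adj v w}
  port_inj : ∀ v u w : Fin n, G.Adj v u → G.Adj v w → portNum v u = portNum v w → u = w

namespace PortGraph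

/-- The degree of a node. -/
noncomputable def degree (PG : PortGraph) (v : Fin PG.n) : ℕ :=
  Nat.card {w : Fin PG.n // PG.G.Adj v w}

open Classical in
/-- The neighbor of `v` reached through port `p` (junk value `v` if there is none). -/
noncomputable def nbr (PG : PortGraph) (v : Fin PG.n) (p : ℕ) : Fin PG.n :=
  if h : ∃ u : Fin PG.n, PG.G.Adj v u ∧ PG.portNum v u = p then h.choose else v

/-- Abstract (augmented truncated) views: a view at depth `0` is a leaf carrying a degree;
a view at depth `ℓ+1` is a node whose children are listed in the order of the port numbers
`0, …, d-1` at the root, each child carrying the port number at the other endpoint of the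
corresponding edge together with the subview at depth `ℓ`. -/
inductive AugView : Type
  | leaf (deg : ℕ) : AugView
  | node (children : List (ℕ × AugView)) : AugView

/-- The augmented truncated view `B^ℓ(v)` of node `v` at depth `ℓ`. -/
noncomputable def augView (PG : PortGraph) : ℕ → Fin PG.n → AugView
  | 0, v => AugView.leaf (PG.degree v)
  | (ℓ + 1), v => AugView.node ((List.range (PG.degree v)).map
      fun p => (PG.portNum (PG.nbr v p) v, PG.augView ℓ (PG.nbr v p)))

/-- `IsPath PG v s vs` means: the sequence `s = (p₁, q₁, …, p_k, q_k)` of port numbers codes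
a path in `PG` starting at `v` whose i-th edge carries port `p_i` at the endpoint closer to
`v` and `q_i` at the other endpoint, and `vs` is the list of visited vertices (from `v` on). -/
inductive IsPath (PG : PortGraph) : Fin PG.n → List ℕ → List (Fin PG.n) → Prop
  | nil (v : Fin PG.n) : IsPath PG v [] [v]
  | cons (v u : Fin PG.n) (p q : ℕ) (rest : List ℕ) (vs : List (Fin PG.n))
      (hadj : PG.G.Adj v u) (hp : PG.portNum v u = p) (hq : PG.portNum u v = q)
      (htail : IsPath PG u rest vs) : IsPath PG v (p :: q :: rest) (v :: vs)

/-- `P` is a leader election output for `PG`: every node `v` outputs a sequence of port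
numbers coding a simple path starting at `v`, and all these paths end at a common node. -/
def IsLeaderElection (PG : PortGraph) (P : Fin PG.n → List ℕ) : Prop :=
  ∃ leader : Fin PG.n, ∀ v : Fin PG.n, ∃ vs : List (Fin PG.n),
    PG.IsPath v (P v) vs ∧ vs.Nodup ∧ vs.getLast? = some leader

/-- A graph is feasible if at some depth all augmented truncated views are pairwise distinct. -/
def Feasible (PG : PortGraph) : Prop :=
  ∃ ℓ : ℕ, Function.Injective (PG.augView ℓ)

/-- The election index: the smallest depth at which all augmented truncated views are distinct. -/
noncomputable def electionIndex (PG : PortGraph) : ℕ :=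
  sInf {ℓ : ℕ | Function.Injective (PG.augView ℓ)}

/-- The diameter: the maximum distance between two nodes. -/
noncomputable def diam (PG : PortGraph) : ℕ :=
  sSup (Set.range fun p : Fin PG.n × Fin PG.n => PG.G.dist p.1 p.2)

end PortGraph

namespace NoAdvice

open PortGraph

/-! ### An abstract bisimulation criterion for equality of views -/

theorem sim_views {PG1 PG2 : PortGraph} (R : ℕ → Fin PG1.n → Fin PG2.n → Prop)
    (hdeg : ∀ k a b, R k a b → PG1.degree a = PG2.degree b)
    (hstep : ∀ k a b, R (k+1) a b → ∀ p, p < PG1.degree a →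
      (PG1.portNum (PG1.nbr a p) a = PG2.portNum (PG2.nbr b p) b ∧
        R k (PG1.nbr a p) (PG2.nbr b p))) :
    ∀ k a b, R k a b → PG1.augView k a = PG2.augView k b := by
  intro k
  induction k with
  | zero =>
    intro a b h
    simp only [PortGraph.augView]
    rw [hdeg 0 a b h]
  | succ k ih =>
    intro a b h
    have hd := hdeg _ _ _ h
    simp only [PortGraph.augView]
    rw [← hd]
    congr 1
    apply List.map_congr_left
    intro p hp
    have hp' : p < PG1.degree a := List.mem_range.mp hp
    obtain ⟨hq, hr⟩ := hstep _ _ _ h p hp'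
    rw [Prod.ext_iff]
    exact ⟨hq, ih _ _ hr⟩

/-! ### Decorated cycles: a cycle of length `m+3` with `c x` pendant leaves at node `x` -/

abbrev CV (m : ℕ) (c : ZMod (m+3) → ℕ) : Type := Σ x : ZMod (m+3), Fin (c x + 1)

section DecCycle

variable {m : ℕ} {c : ZMod (m+3) → ℕ}

/-- The cycle node at position `x`. -/
def cy (c : ZMod (m+3) → ℕ) (x : ZMod (m+3)) : CV m c := ⟨x, ⟨0, Nat.succ_pos _⟩⟩

lemma zone : (1 : ZMod (m+3)) ≠ 0 := by
  haveI : Fact (1 < m+3) := ⟨by omega⟩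
  exact one_ne_zero

lemma ztwo : (2 : ZMod (m+3)) ≠ 0 := by
  intro h
  have h2 : ((2:ℕ) : ZMod (m+3)) = 0 := by push_cast; exact h
  rw [ZMod.natCast_eq_zero_iff] at h2
  exact absurd (Nat.le_of_dvd two_pos h2) (by omega)

lemma add_one_ne (x : ZMod (m+3)) : x + 1 ≠ x := by
  intro h
  exact zone (by have := congrArg (fun z => z - x) h; simpa [add_comm] using this)

lemma sub_one_ne (x : ZMod (m+3)) : x - 1 ≠ x := by
  intro h
  exact zone (by have := congrArg (fun z => x - z) h; simpa [sub_sub_cancel] using this)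

lemma add_ne_sub (x : ZMod (m+3)) : x + 1 ≠ x - 1 := by
  intro h
  apply ztwo (m := m)
  have : (x + 1) - (x - 1) = 0 := by rw [h]; ring
  calc (2 : ZMod (m+3)) = (x+1) - (x-1) := by ring
  _ = 0 := this

/-- Adjacency on the decorated cycle. -/
def Adj' (a b : CV m c) : Prop :=
  (a.2.val = 0 ∧ b.2.val = 0 ∧ (b.1 = a.1 + 1 ∨ b.1 = a.1 - 1)) ∨
  (a.1 = b.1 ∧ ((a.2.val = 0 ∧ b.2.val ≠ 0) ∨ (a.2.val ≠ 0 ∧ b.2.val = 0)))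

lemma Adj'_symm : ∀ {a b : CV m c}, Adj' a b → Adj' b a := by
  rintro ⟨x, u⟩ ⟨y, w⟩ (⟨h1, h2, (h3 | h3)⟩ | ⟨h1, (⟨h2, h3⟩ | ⟨h2, h3⟩)⟩)
  · refine Or.inl ⟨h2, h1, Or.inr ?_⟩
    show x = y - 1
    rw [show y = x + 1 from h3]; ring
  · refine Or.inl ⟨h2, h1, Or.inl ?_⟩
    show x = y + 1
    rw [show y = x - 1 from h3]; ring
  · exact Or.inr ⟨h1.symm, Or.inr ⟨h3, h2⟩⟩
  · exact Or.inr ⟨h1.symm, Or.inl ⟨h3, h2⟩⟩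

lemma Adj'_irrefl : ∀ {a : CV m c}, ¬ Adj' a a := by
  rintro ⟨x, u⟩ (⟨h1, h2, (h3 | h3)⟩ | ⟨h1, (⟨h2, h3⟩ | ⟨h2, h3⟩)⟩)
  · exact add_one_ne x h3.symm
  · exact sub_one_ne x h3.symm
  · exact h3 h2
  · exact h2 h3

def cycG (m : ℕ) (c : ZMod (m+3) → ℕ) : SimpleGraph (CV m c) where
  Adj := Adj'
  symm := ⟨fun _ _ h => Adj'_symm h⟩
  loopless := ⟨fun _ h => Adj'_irrefl h⟩

lemma cycG_conn : (cycG m c).Connected := by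
  have key : ∀ a : CV m c, (cycG m c).Reachable (cy c 0) a := by
    have hcyc : ∀ k : ℕ, (cycG m c).Reachable (cy c 0) (cy c (k : ZMod (m+3))) := by
      intro k
      induction k with
      | zero => rw [Nat.cast_zero]
      | succ k ih =>
        apply ih.trans
        apply SimpleGraph.Adj.reachable
        show Adj' _ _
        left
        refine ⟨rfl, rfl, Or.inl ?_⟩
        show ((k+1 : ℕ) : ZMod (m+3)) = (k : ZMod (m+3)) + 1
        push_cast
        ring

    rintro ⟨x, u⟩
    have hx : (cycG m c).Reachable (cy c 0) (cy c x) := by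
      have := hcyc x.val
      rwa [ZMod.natCast_rightInverse x] at this
    by_cases hu : u.val = 0
    · have : (⟨x, u⟩ : CV m c) = cy c x := by
        simp only [cy]
        congr 1
        exact Fin.ext hu
      rw [this]; exact hx
    · apply hx.trans
      apply SimpleGraph.Adj.reachable
      show Adj' _ _
      exact Or.inr ⟨rfl, Or.inl ⟨rfl, hu⟩⟩
  exact ⟨fun a b => (key a).symm.trans (key b)⟩

/-- Port numbers on the decorated cycle: at a cycle node, port `0` goes forward,
port `1` backward, ports `2, …` to the pendant leaves; a leaf has single port `0`. -/
def pn (a b : CV m c) : ℕ :=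
  if a.2.val = 0 then
    (if b.2.val = 0 then (if b.1 = a.1 + 1 then 0 else 1) else b.2.val + 1)
  else 0

def deg' (a : CV m c) : ℕ := if a.2.val = 0 then c a.1 + 2 else 1

lemma adj'_cases {x : ZMod (m+3)} {f : Fin (c x + 1)} (hf : f.val = 0) {b : CV m c}
    (h : Adj' ⟨x, f⟩ b) :
    b = cy c (x+1) ∨ b = cy c (x-1) ∨ (∃ k : Fin (c x + 1), k.val ≠ 0 ∧ b = ⟨x, k⟩) := by
  obtain ⟨y, w⟩ := b
  rcases h with ⟨_, h2, (h3 | h3)⟩ | ⟨h1, (⟨_, h3⟩ | ⟨h2, _⟩)⟩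
  · left
    simp only [cy] at h3 ⊢
    subst h3
    congr 1
    exact Fin.ext h2
  · right; left
    simp only [cy] at h3 ⊢
    subst h3
    congr 1
    exact Fin.ext h2
  · right; right
    simp only at h1
    subst h1
    exact ⟨w, h3, rfl⟩
  · exact absurd hf h2

lemma adj'_cases_leaf {x : ZMod (m+3)} {f : Fin (c x + 1)} (hf : f.val ≠ 0) {b : CV m c}
    (h : Adj' ⟨x, f⟩ b) : b = cy c x := by
  obtain ⟨y, w⟩ := b
  rcases h with ⟨h1, _, _⟩ | ⟨h1, (⟨h2, _⟩ | ⟨_, h3⟩)⟩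
  · exact absurd h1 hf
  · exact absurd h2 hf
  · simp only at h1
    subst h1
    simp only [cy]
    congr 1
    exact Fin.ext h3

lemma adj'_fwd (x : ZMod (m+3)) : Adj' (cy c x) (cy c (x+1)) := Or.inl ⟨rfl, rfl, Or.inl rfl⟩
lemma adj'_bwd (x : ZMod (m+3)) : Adj' (cy c x) (cy c (x-1)) := Or.inl ⟨rfl, rfl, Or.inr rfl⟩
lemma adj'_leaf {x : ZMod (m+3)} {k : Fin (c x + 1)} (hk : k.val ≠ 0) :
    Adj' (cy c x) ⟨x, k⟩ := Or.inr ⟨rfl, Or.inl ⟨rfl, hk⟩⟩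
lemma adj'_up {x : ZMod (m+3)} {k : Fin (c x + 1)} (hk : k.val ≠ 0) :
    Adj' (⟨x, k⟩ : CV m c) (cy c x) := Or.inr ⟨rfl, Or.inr ⟨hk, rfl⟩⟩

lemma pn_fwd (x : ZMod (m+3)) : pn (cy c x) (cy c (x+1)) = 0 := by
  simp [pn, cy]

lemma pn_bwd (x : ZMod (m+3)) : pn (cy c x) (cy c (x-1)) = 1 := by
  have hne : ¬ (x - 1 = x + 1) := fun h => add_ne_sub x h.symm
  simp [pn, cy, hne]

lemma pn_leaf {x : ZMod (m+3)} {k : Fin (c x + 1)} (hk : k.val ≠ 0) :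
    pn (cy c x) (⟨x, k⟩ : CV m c) = k.val + 1 := by
  simp [pn, cy, hk]

lemma pn_up {x : ZMod (m+3)} {k : Fin (c x + 1)} (hk : k.val ≠ 0) (b : CV m c) :
    pn (⟨x, k⟩ : CV m c) b = 0 := by
  simp [pn, hk]

lemma pn_lt {a b : CV m c} (h : Adj' a b) : pn a b < deg' a := by
  obtain ⟨x, f⟩ := a
  by_cases hf : f.val = 0
  · rcases adj'_cases hf h with rfl | rfl | ⟨k, hk, rfl⟩
    · have : (⟨x, f⟩ : CV m c) = cy c x := by simp only [cy]; congr 1; exact Fin.ext hf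
      rw [this, pn_fwd]
      simp [deg', cy]
    · have : (⟨x, f⟩ : CV m c) = cy c x := by simp only [cy]; congr 1; exact Fin.ext hf
      rw [this, pn_bwd]
      simp [deg', cy]
    · have he : (⟨x, f⟩ : CV m c) = cy c x := by simp only [cy]; congr 1; exact Fin.ext hf
      rw [he, pn_leaf hk]
      have := k.isLt
      simp only [deg', cy]
      simp only [if_pos]
      omega
  · rw [pn_up hf]
    simp [deg', hf]

lemma pn_inj {a u w : CV m c} (h1 : Adj' a u) (h2 : Adj' a w) (h3 : pn a u = pn a w) :
    u = w := by
  obtain ⟨x, f⟩ := a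
  by_cases hf : f.val = 0
  · have he : (⟨x, f⟩ : CV m c) = cy c x := by simp only [cy]; congr 1; exact Fin.ext hf
    rw [he] at h1 h2 h3
    rcases adj'_cases rfl h1 with rfl | rfl | ⟨k, hk, rfl⟩ <;>
      rcases adj'_cases rfl h2 with rfl | rfl | ⟨k', hk', rfl⟩
    · rfl
    · rw [pn_fwd, pn_bwd] at h3; omega
    · rw [pn_fwd, pn_leaf hk'] at h3; omega
    · rw [pn_fwd, pn_bwd] at h3; omega
    · rfl
    · rw [pn_bwd, pn_leaf hk'] at h3; omega
    · rw [pn_fwd, pn_leaf hk] at h3; omega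
    · rw [pn_bwd, pn_leaf hk] at h3; omega
    · rw [pn_leaf hk, pn_leaf hk'] at h3
      congr 1
      exact Fin.ext (by omega)
  · rw [adj'_cases_leaf hf h1, adj'_cases_leaf hf h2]

end DecCycle

section DecCycle2

variable {m : ℕ} {c : ZMod (m+3) → ℕ}

/-- Neighbours of a cycle node, enumerated by port number. -/
def nbrFun (x : ZMod (m+3)) (k : Fin (c x + 2)) : CV m c :=
  if h0 : k.val = 0 then cy c (x+1)
  else if h1 : k.val = 1 then cy c (x-1)
  else ⟨x, ⟨k.val - 1, by omega⟩⟩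

lemma nbrFun_adj (x : ZMod (m+3)) (k : Fin (c x + 2)) : Adj' (cy c x) (nbrFun x k) := by
  unfold nbrFun
  split
  · exact adj'_fwd x
  · split
    · exact adj'_bwd x
    · exact adj'_leaf (by simp; omega)

lemma nbrFun_bij (x : ZMod (m+3)) :
    Function.Bijective (fun k => (⟨nbrFun x k, nbrFun_adj x k⟩ :
      {b : CV m c // Adj' (cy c x) b})) := by
  constructor
  · intro k k' he
    have he' : nbrFun x k = nbrFun x k' := congrArg Subtype.val he
    unfold nbrFun at he'
    split at he' <;> split at he' <;> rename_i g1 g2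
    · exact Fin.ext (by omega)
    · split at he'
      · exact absurd (congrArg Sigma.fst he') (fun h => add_ne_sub x h)
      · have := congrArg Sigma.fst he'
        simp only [cy] at this
        exact absurd (congrArg (fun z => z - x) this) (by simpa using zone)
    · split at he' <;> rename_i g3
      · exact absurd (congrArg Sigma.fst he') (fun h => add_ne_sub x h.symm)
      · split at he'
        · exact Fin.ext (by omega)
        · have := congrArg Sigma.fst he'
          simp only [cy] at this
          exact absurd (congrArg (fun z => x - z) this) (by simpa [sub_sub_cancel] using zone)
    · split at he' <;> rename_i g3
      · have := congrArg Sigma.fst he'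
        simp only [cy] at this
        exact absurd (congrArg (fun z => z - x) this.symm) (by simpa using zone)
      · split at he' <;> rename_i g4
        · have := congrArg Sigma.fst he'
          simp only [cy] at this
          exact absurd (congrArg (fun z => x - z) this.symm) (by simpa [sub_sub_cancel] using zone)
        · have h2 : (⟨x, ⟨k.val - 1, by omega⟩⟩ : CV m c) = ⟨x, ⟨k'.val - 1, by omega⟩⟩ := he'
          have h3 := congrArg (fun (z : CV m c) => z.2.val)
            (show (⟨x, ⟨k.val - 1, by omega⟩⟩ : CV m c) = ⟨x, ⟨k'.val - 1, by omega⟩⟩ from he')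
          simp only at h3
          exact Fin.ext (by omega)
  · rintro ⟨b, hb⟩
    rcases adj'_cases rfl hb with rfl | rfl | ⟨k, hk, rfl⟩
    · exact ⟨⟨0, by omega⟩, by simp [nbrFun]⟩
    · exact ⟨⟨1, by omega⟩, by simp [nbrFun]⟩
    · refine ⟨⟨k.val + 1, by have := k.isLt; omega⟩, ?_⟩
      apply Subtype.ext
      simp only [nbrFun]
      rw [dif_neg (by simp), dif_neg (by show ¬ (k.val + 1 = 1); omega)]
      congr 1

lemma card_adj'_cy (x : ZMod (m+3)) :
    Nat.card {b : CV m c // Adj' (cy c x) b} = c x + 2 :=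
  Nat.card_eq_of_equiv_fin (Equiv.ofBijective _ (nbrFun_bij x)).symm

lemma card_adj'_leaf {x : ZMod (m+3)} {f : Fin (c x + 1)} (hf : f.val ≠ 0) :
    Nat.card {b : CV m c // Adj' ⟨x, f⟩ b} = 1 := by
  apply Nat.card_eq_of_equiv_fin (n := 1)
  refine ⟨fun _ => 0, fun _ => ⟨cy c x, adj'_up hf⟩, ?_, ?_⟩
  · rintro ⟨b, hb⟩
    apply Subtype.ext
    exact (adj'_cases_leaf hf hb).symm
  · intro z
    exact Subsingleton.elim _ _

lemma card_adj' (a : CV m c) : Nat.card {b : CV m c // Adj' a b} = deg' a := by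
  obtain ⟨x, f⟩ := a
  by_cases hf : f.val = 0
  · have he : (⟨x, f⟩ : CV m c) = cy c x := by simp only [cy]; congr 1; exact Fin.ext hf
    rw [he, card_adj'_cy]
    simp [deg', cy]
  · rw [card_adj'_leaf hf]
    simp [deg', hf]

/-- The vertex-relabelling equivalence. -/
noncomputable def cvE (m : ℕ) (c : ZMod (m+3) → ℕ) :
    CV m c ≃ Fin (Fintype.card (CV m c)) := Fintype.equivFin _

lemma map_adj_iff {v w : Fin (Fintype.card (CV m c))} :
    (SimpleGraph.map (cvE m c).toEmbedding (cycG m c)).Adj v w ↔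
      Adj' ((cvE m c).symm v) ((cvE m c).symm w) := by
  rw [SimpleGraph.map_adj]
  constructor
  · rintro ⟨a, b, h, rfl, rfl⟩
    have h' : Adj' a b := h
    simpa using h'
  · intro h
    exact ⟨_, _, h, by simp, by simp⟩

lemma card_adj_map (v : Fin (Fintype.card (CV m c))) :
    Nat.card {w : Fin (Fintype.card (CV m c)) //
      (SimpleGraph.map (cvE m c).toEmbedding (cycG m c)).Adj v w} =
      deg' ((cvE m c).symm v) := by
  rw [Nat.card_congr (Equiv.subtypeEquiv (cvE m c).symm (fun w => map_adj_iff))]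
  exact card_adj' _

/-- The decorated cycle as a `PortGraph`. -/
@[reducible] noncomputable def decCycle (m : ℕ) (c : ZMod (m+3) → ℕ) : PortGraph where
  n := Fintype.card (CV m c)
  three_le := by
    have h1 : Fintype.card (ZMod (m+3)) ≤ Fintype.card (CV m c) :=
      Fintype.card_le_of_injective (fun x => cy c x)
        (fun a b h => congrArg Sigma.fst h)
    rw [ZMod.card] at h1
    omega
  G := SimpleGraph.map (cvE m c).toEmbedding (cycG m c)
  conn := by
    refine cycG_conn.map (f := ⟨fun a => cvE m c a, fun hadj => ?_⟩) ?_
    · rw [SimpleGraph.map_adj]; exact ⟨_, _, hadj, rfl, rfl⟩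
    · intro i
      exact ⟨(cvE m c).symm i, (cvE m c).apply_symm_apply i⟩
  portNum := fun i j => pn ((cvE m c).symm i) ((cvE m c).symm j)
  port_lt := by
    intro v u hadj
    rw [card_adj_map]
    exact pn_lt (map_adj_iff.mp hadj)
  port_inj := by
    intro v u w h1 h2 h3
    exact (cvE m c).symm.injective (pn_inj (map_adj_iff.mp h1) (map_adj_iff.mp h2) h3)

lemma decCycle_adj {a b : CV m c} :
    (decCycle m c).G.Adj (cvE m c a) (cvE m c b) ↔ Adj' a b := by
  rw [show (decCycle m c).G = SimpleGraph.map (cvE m c).toEmbedding (cycG m c) from rfl,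
    map_adj_iff]
  simp

lemma decCycle_portNum (a b : CV m c) :
    (decCycle m c).portNum (cvE m c a) (cvE m c b) = pn a b := by
  show pn ((cvE m c).symm (cvE m c a)) ((cvE m c).symm (cvE m c b)) = pn a b
  simp

lemma decCycle_degree (a : CV m c) :
    (decCycle m c).degree (cvE m c a) = deg' a := by
  show Nat.card {w : Fin (Fintype.card (CV m c)) //
    (SimpleGraph.map (cvE m c).toEmbedding (cycG m c)).Adj (cvE m c a) w} = _
  rw [card_adj_map]
  simp

lemma decCycle_nbr {a b : CV m c} (h : Adj' a b) {p : ℕ} (hp : pn a b = p) :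
    (decCycle m c).nbr (cvE m c a) p = cvE m c b := by
  have hex : ∃ u, (decCycle m c).G.Adj (cvE m c a) u ∧
      (decCycle m c).portNum (cvE m c a) u = p :=
    ⟨cvE m c b, decCycle_adj.mpr h, by rw [decCycle_portNum, hp]⟩
  rw [PortGraph.nbr, dif_pos hex]
  obtain ⟨hA, hP⟩ := hex.choose_spec
  exact (decCycle m c).port_inj (cvE m c a) hex.choose (cvE m c b) hA (decCycle_adj.mpr h)
    (by rw [hP, decCycle_portNum, hp])

lemma dc_nbr_fwd (x : ZMod (m+3)) :
    (decCycle m c).nbr (cvE m c (cy c x)) 0 = cvE m c (cy c (x+1)) :=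
  decCycle_nbr (adj'_fwd x) (pn_fwd x)

lemma dc_nbr_bwd (x : ZMod (m+3)) :
    (decCycle m c).nbr (cvE m c (cy c x)) 1 = cvE m c (cy c (x-1)) :=
  decCycle_nbr (adj'_bwd x) (pn_bwd x)

lemma dc_nbr_leaf {x : ZMod (m+3)} {k : Fin (c x + 1)} (hk : k.val ≠ 0) :
    (decCycle m c).nbr (cvE m c (cy c x)) (k.val + 1) = cvE m c ⟨x, k⟩ :=
  decCycle_nbr (adj'_leaf hk) (pn_leaf hk)

lemma dc_nbr_up {x : ZMod (m+3)} {k : Fin (c x + 1)} (hk : k.val ≠ 0) :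
    (decCycle m c).nbr (cvE m c ⟨x, k⟩) 0 = cvE m c (cy c x) :=
  decCycle_nbr (adj'_up hk) (pn_up hk _)

lemma pn_back_fwd (x : ZMod (m+3)) : pn (cy c (x+1)) (cy c x) = 1 := by
  have hne : ¬ (x = (x + 1) + 1) := by
    intro h
    apply ztwo (m := m)
    have : x - x = x + 2 - x := by nth_rewrite 1 [h]; ring_nf
    simpa using this.symm
  simp [pn, cy, hne]

lemma pn_back_bwd (x : ZMod (m+3)) : pn (cy c (x-1)) (cy c x) = 0 := by
  have h : x = (x - 1) + 1 := by ring
  simp [pn, cy, ← h]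


lemma sig_cy {m : ℕ} {c : ZMod (m+3) → ℕ} {x : ZMod (m+3)} {f : Fin (c x + 1)}
    (hf : f.val = 0) : (⟨x, f⟩ : CV m c) = cy c x := by
  simp only [cy]
  congr 1
  exact Fin.ext hf

end DecCycle2


/-! ### Extracting information from views -/

def vdeg : AugView → ℕ
  | AugView.leaf d => d
  | AugView.node cs => cs.length

def fwdv : AugView → AugView
  | AugView.node ((_, t) :: _) => t
  | _ => AugView.leaf 0

def fqv : AugView → ℕ
  | AugView.node ((q, _) :: _) => q
  | _ => 0

def dchain : ℕ → AugView → ℕ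
  | 0, t => vdeg t
  | (s+1), t => dchain s (fwdv t)

lemma vdeg_augView (PG : PortGraph) (ℓ : ℕ) (v : Fin PG.n) :
    vdeg (PG.augView ℓ v) = PG.degree v := by
  cases ℓ <;> simp [PortGraph.augView, vdeg]

lemma fwdv_augView (PG : PortGraph) (ℓ : ℕ) (v : Fin PG.n) (h : 0 < PG.degree v) :
    fwdv (PG.augView (ℓ+1) v) = PG.augView ℓ (PG.nbr v 0) := by
  obtain ⟨d, hd⟩ : ∃ d, PG.degree v = d + 1 := ⟨PG.degree v - 1, by omega⟩
  simp only [PortGraph.augView, hd, List.range_succ_eq_map, List.map_cons]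
  rfl

lemma fqv_augView (PG : PortGraph) (ℓ : ℕ) (v : Fin PG.n) (h : 0 < PG.degree v) :
    fqv (PG.augView (ℓ+1) v) = PG.portNum (PG.nbr v 0) v := by
  obtain ⟨d, hd⟩ : ∃ d, PG.degree v = d + 1 := ⟨PG.degree v - 1, by omega⟩
  simp only [PortGraph.augView, hd, List.range_succ_eq_map, List.map_cons]
  rfl

section DecCycle3

variable {m : ℕ} {c : ZMod (m+3) → ℕ}

lemma deg_cy (x : ZMod (m+3)) :
    (decCycle m c).degree (cvE m c (cy c x)) = c x + 2 := by
  rw [decCycle_degree]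
  simp [deg', cy]

lemma deg_leaf {x : ZMod (m+3)} {k : Fin (c x + 1)} (hk : k.val ≠ 0) :
    (decCycle m c).degree (cvE m c ⟨x, k⟩) = 1 := by
  rw [decCycle_degree]
  simp [deg', hk]

lemma dchain_cycle : ∀ s ℓ, s ≤ ℓ → ∀ x : ZMod (m+3),
    dchain s ((decCycle m c).augView ℓ (cvE m c (cy c x))) = c (x + (s : ZMod (m+3))) + 2 := by
  intro s
  induction s with
  | zero =>
    intro ℓ _ x
    show vdeg _ = _
    rw [vdeg_augView, deg_cy]
    norm_num
  | succ s ih =>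
    intro ℓ hs x
    obtain ⟨ℓ', rfl⟩ : ∃ ℓ', ℓ = ℓ' + 1 := ⟨ℓ - 1, by omega⟩
    show dchain s (fwdv _) = _
    rw [fwdv_augView _ _ _ (by rw [deg_cy]; omega), dc_nbr_fwd, ih ℓ' (by omega)]
    congr 2
    push_cast
    ring

theorem decCycle_feasible (κ : ℕ) (anc : ZMod (m+3)) (hanc : ∀ x, c x = κ ↔ x = anc) :
    (decCycle m c).Feasible := by
  have key : ∀ (x y : ZMod (m+3)) (ℓ : ℕ), m + 3 ≤ ℓ →
      (decCycle m c).augView ℓ (cvE m c (cy c x)) =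
        (decCycle m c).augView ℓ (cvE m c (cy c y)) → x = y := by
    intro x y ℓ hl h
    have h1 := congrArg (dchain (anc - x).val) h
    rw [dchain_cycle _ ℓ (le_trans (le_of_lt (ZMod.val_lt _)) hl) x,
        dchain_cycle _ ℓ (le_trans (le_of_lt (ZMod.val_lt _)) hl) y] at h1
    have hcast : (((anc - x).val : ℕ) : ZMod (m+3)) = anc - x :=
      ZMod.natCast_rightInverse (anc - x)
    rw [hcast] at h1
    have hxa : x + (anc - x) = anc := by ring
    rw [hxa] at h1
    have h2 : c (y + (anc - x)) = κ := by
      have h3 : c anc = κ := (hanc anc).mpr rfl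
      omega
    have h4 := (hanc _).mp h2
    have : y + (anc - x) = x + (anc - x) := by rw [h4, hxa]
    exact (add_right_cancel this).symm
  refine ⟨m + 5, ?_⟩
  intro v u h
  obtain ⟨a, rfl⟩ : ∃ a : CV m c, cvE m c a = v := ⟨(cvE m c).symm v, by simp⟩
  obtain ⟨b, rfl⟩ : ∃ b : CV m c, cvE m c b = u := ⟨(cvE m c).symm u, by simp⟩
  obtain ⟨x, xf⟩ := a
  obtain ⟨y, yf⟩ := b
  by_cases hx : xf.val = 0 <;> by_cases hy : yf.val = 0
  · have hx' : (⟨x, xf⟩ : CV m c) = cy c x := by simp only [cy]; congr 1; exact Fin.ext hx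
    have hy' : (⟨y, yf⟩ : CV m c) = cy c y := by simp only [cy]; congr 1; exact Fin.ext hy
    rw [hx', hy'] at h ⊢
    rw [key x y (m+5) (by omega) h]
  · exfalso
    have hv := congrArg vdeg h
    rw [vdeg_augView, vdeg_augView] at hv
    have h1 : (⟨x, xf⟩ : CV m c) = cy c x := by simp only [cy]; congr 1; exact Fin.ext hx
    rw [h1, deg_cy, deg_leaf hy] at hv
    omega
  · exfalso
    have hv := congrArg vdeg h
    rw [vdeg_augView, vdeg_augView] at hv
    have h1 : (⟨y, yf⟩ : CV m c) = cy c y := by simp only [cy]; congr 1; exact Fin.ext hy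
    rw [h1, deg_cy, deg_leaf hx] at hv
    omega
  · have hw := congrArg fwdv h
    rw [show (m+5) = (m+4) + 1 from rfl,
      fwdv_augView _ _ _ (by rw [deg_leaf hx]; omega),
      fwdv_augView _ _ _ (by rw [deg_leaf hy]; omega),
      dc_nbr_up hx, dc_nbr_up hy] at hw
    have hxy := key x y (m+4) (by omega) hw
    subst hxy
    have hq := congrArg fqv h
    rw [show (m+5) = (m+4) + 1 from rfl,
      fqv_augView _ _ _ (by rw [deg_leaf hx]; omega),
      fqv_augView _ _ _ (by rw [deg_leaf hy]; omega),
      dc_nbr_up hx, dc_nbr_up hy, decCycle_portNum, decCycle_portNum,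
      pn_leaf hx, pn_leaf hy] at hq
    congr 2
    exact Fin.ext (by omega)

/-! ### Positions and displacement along coded paths -/

noncomputable def posOf : Fin (Fintype.card (CV m c)) → ZMod (m+3) :=
  fun v => ((cvE m c).symm v).1

lemma posOf_cvE (a : CV m c) : posOf (cvE m c a) = a.1 := by
  simp [posOf]

lemma adj_pos {v u : Fin (Fintype.card (CV m c))} (h : (decCycle m c).G.Adj v u) :
    posOf u = posOf v + 1 ∨ posOf u = posOf v - 1 ∨ posOf u = posOf v := by
  simp only [posOf]
  have h' : Adj' ((cvE m c).symm v) ((cvE m c).symm u) := map_adj_iff.mp h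
  rcases h' with ⟨_, _, (h3 | h3)⟩ | ⟨h1, _⟩
  · left; exact h3
  · right; left; exact h3
  · right; right; exact h1.symm

lemma isPath_ne_nil {v : Fin (decCycle m c).n} {L vs} (h : (decCycle m c).IsPath v L vs) :
    vs ≠ [] := by
  cases h <;> simp

lemma isPath_pos {v : Fin (decCycle m c).n} {L vs} (h : (decCycle m c).IsPath v L vs) :
    ∀ w, vs.getLast? = some w →
      ∃ δ : ℤ, δ.natAbs ≤ L.length ∧ posOf w = posOf v + (δ : ZMod (m+3)) := by
  induction h with
  | nil v =>
    intro w hw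
    simp only [List.getLast?_singleton, Option.some.injEq] at hw
    subst hw
    exact ⟨0, by simp⟩
  | cons v u p q rest vs hadj hp hq htail ih =>
    intro w hw
    have hne : vs ≠ [] := isPath_ne_nil htail
    obtain ⟨v0, vs', rfl⟩ : ∃ v0 vs', vs = v0 :: vs' := by
      cases vs
      · exact absurd rfl hne
      · exact ⟨_, _, rfl⟩
    rw [List.getLast?_cons_cons] at hw
    obtain ⟨δ', h1, h2⟩ := ih w hw
    have step : ∃ ε : ℤ, ε.natAbs ≤ 1 ∧ posOf u = posOf v + (ε : ZMod (m+3)) := by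
      rcases adj_pos hadj with h3 | h3 | h3
      · exact ⟨1, by norm_num, by rw [h3]; push_cast; ring⟩
      · exact ⟨-1, by norm_num, by rw [h3]; push_cast; ring⟩
      · exact ⟨0, by norm_num, by rw [h3]; push_cast; ring⟩
    obtain ⟨ε, he1, he2⟩ := step
    refine ⟨ε + δ', ?_, ?_⟩
    · have := Int.natAbs_add_le ε δ'
      simp only [List.length_cons]
      omega
    · rw [h2, he2]
      push_cast
      ring

end DecCycle3

/-! ### The nested family of patterns -/

def W : ℕ → List ℕ
  | j => ([0, 0] ++ ((List.range j).attach.flatMap fun i =>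
      (List.replicate j (W i.1)).flatten)) ++ [j + 1]
  decreasing_by exact List.mem_range.mp i.2

def Wb (j s : ℕ) : List ℕ := (List.range s).flatMap fun i => (List.replicate j (W i)).flatten

abbrev ML (j : ℕ) : ℕ := (W j).length

lemma W_eq (j : ℕ) : W j = ([0, 0] ++ Wb j j) ++ [j + 1] := by
  rw [W, Wb]
  congr 2
  conv_rhs => rw [← List.attach_map_subtype_val (List.range j), List.flatMap_map]

lemma Wb_succ (j s : ℕ) : Wb j (s+1) = Wb j s ++ (List.replicate j (W s)).flatten := by
  rw [Wb, Wb, List.range_succ, List.flatMap_append]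
  simp

lemma Wb_split (j : ℕ) {i s : ℕ} (h : i ≤ s) : ∃ u, Wb j s = Wb j i ++ u := by
  induction s with
  | zero =>
    have : i = 0 := by omega
    exact ⟨[], by simp [this]⟩
  | succ s ihs =>
    rcases Nat.lt_or_ge i (s+1) with h1 | h1
    · obtain ⟨u, hu⟩ := ihs (by omega)
      exact ⟨u ++ (List.replicate j (W s)).flatten, by rw [Wb_succ, hu, List.append_assoc]⟩
    · have : i = s + 1 := by omega
      exact ⟨[], by simp [this]⟩

lemma repFlat_len (n : ℕ) (l : List ℕ) : ((List.replicate n l).flatten).length = n * l.length := by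
  induction n with
  | zero => simp
  | succ n ih =>
    rw [List.replicate_succ, List.flatten_cons, List.length_append, ih]
    ring

lemma repFlat_getD (n : ℕ) (l : List ℕ) : ∀ t, t < n * l.length →
    ((List.replicate n l).flatten).getD t 0 = l.getD (t % l.length) 0 := by
  induction n with
  | zero => intro t ht; simp at ht
  | succ n ih =>
    intro t ht
    rw [List.replicate_succ, List.flatten_cons]
    by_cases h : t < l.length
    · rw [List.getD_append _ _ _ _ h, Nat.mod_eq_of_lt h]
    · have hle : l.length ≤ t := by omega
      have hexp : (n+1) * l.length = n * l.length + l.length := by ring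
      rw [List.getD_append_right _ _ _ _ hle, ih _ (by omega), Nat.mod_eq_sub_mod hle]

lemma ML_ge3 (j : ℕ) : 3 ≤ ML j := by
  show 3 ≤ (W j).length
  rw [W_eq]
  simp

lemma W_le : ∀ j, ∀ a ∈ W j, a ≤ j + 1 := by
  intro j
  induction j using Nat.strong_induction_on with
  | _ j ih =>
    intro a ha
    rw [W_eq] at ha
    rcases List.mem_append.mp ha with h | h
    · rcases List.mem_append.mp h with h | h
      · simp at h; omega
      · rw [Wb] at h
        rcases List.mem_flatMap.mp h with ⟨i, hi, hmem⟩
        rcases List.mem_flatten.mp hmem with ⟨l, hl, hal⟩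
        rcases List.mem_replicate.mp hl with ⟨-, rfl⟩
        have hij : i < j := List.mem_range.mp hi
        have := ih i hij a hal
        omega
    · simp at h; omega

lemma W_getD_last (j : ℕ) : (W j).getD (ML j - 1) 0 = j + 1 := by
  have h1 : ML j - 1 = ([0,0] ++ Wb j j).length := by
    show (W j).length - 1 = _
    rw [W_eq]
    simp
  rw [W_eq, h1, List.getD_append_right _ _ _ _ (le_refl _)]
  simp

lemma W_getD_small (j p : ℕ) (hp : p < ML j - 1) : (W j).getD p 0 ≤ j := by
  have hml : ML j = ([0,0] ++ Wb j j).length + 1 := by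
    show (W j).length = _
    rw [W_eq]
    simp
  have hlen : p < ([0,0] ++ Wb j j).length := by omega
  rw [W_eq, List.getD_append _ _ _ _ hlen]
  have hm : ([0,0] ++ Wb j j).getD p 0 ∈ ([0,0] ++ Wb j j) := by
    rw [List.getD_eq_getElem _ _ hlen]
    exact List.getElem_mem _
  set a := ([0,0] ++ Wb j j).getD p 0 with ha
  clear_value a
  rcases List.mem_append.mp hm with h | h
  · simp at h; omega
  · rw [Wb] at h
    rcases List.mem_flatMap.mp h with ⟨i, hi, hmem⟩
    rcases List.mem_flatten.mp hmem with ⟨l, hl, hal⟩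
    rcases List.mem_replicate.mp hl with ⟨-, rfl⟩
    have h2 := W_le i _ hal
    have h3 := List.mem_range.mp hi
    omega

def S (i j : ℕ) : ℕ := ([0,0] ++ Wb j i).length

lemma run_getD {i j : ℕ} (hij : i < j) (t : ℕ) (ht : t < j * ML i) :
    (W j).getD (S i j + t) 0 = (W i).getD (t % ML i) 0 := by
  obtain ⟨u, hu⟩ := Wb_split j (show i + 1 ≤ j from hij)
  rw [Wb_succ] at hu
  have hW : W j = ([0,0] ++ Wb j i) ++ ((List.replicate j (W i)).flatten ++ (u ++ [j+1])) := by
    rw [W_eq, hu]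
    simp [List.append_assoc]
  rw [hW, show S i j + t = ([0,0] ++ Wb j i).length + t from rfl,
    List.getD_append_right _ _ _ _ (Nat.le_add_right _ _), Nat.add_sub_cancel_left]
  rw [List.getD_append _ _ _ _ (by rw [repFlat_len]; exact ht)]
  exact repFlat_getD j (W i) t ht

lemma S_window {i j : ℕ} (hij : i < j) : S i j + j * ML i < ML j := by
  obtain ⟨u, hu⟩ := Wb_split j (show i + 1 ≤ j from hij)
  rw [Wb_succ] at hu
  have h1 : (W j).length = ([0,0] ++ Wb j i).length +
      (((List.replicate j (W i)).flatten).length + (u.length + 1)) := by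
    rw [W_eq, hu]
    simp [List.append_assoc]
    omega
  rw [repFlat_len] at h1
  have h2 : S i j = (Wb j i).length + 2 := by simp [S]
  have h3 : ([0,0] ++ Wb j i).length = (Wb j i).length + 2 := by simp
  show S i j + j * (W i).length < (W j).length
  omega

/-! ### The family of feasible port graphs -/

abbrev mj (j : ℕ) : ℕ := ML j - 3

lemma mj_add (j : ℕ) : mj j + 3 = ML j := by
  have := ML_ge3 j
  show ML j - 3 + 3 = ML j
  omega

def cj (j : ℕ) : ZMod (mj j + 3) → ℕ := fun x => (W j).getD x.val 0

noncomputable abbrev HH (j : ℕ) : PortGraph := decCycle (mj j) (cj j)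

lemma HH_feasible (j : ℕ) : (HH j).Feasible := by
  apply decCycle_feasible (j+1) (((ML j - 1 : ℕ) : ZMod (mj j + 3)))
  intro x
  have hmod : mj j + 3 = ML j := mj_add j
  have hvx : x.val < ML j := by have := ZMod.val_lt x; omega
  constructor
  · intro hx
    have hx' : x.val = ML j - 1 := by
      by_contra hne
      have h2 := W_getD_small j x.val (by omega)
      rw [show cj j x = (W j).getD x.val 0 from rfl] at hx
      omega
    have h3 : ((x.val : ℕ) : ZMod (mj j + 3)) = x := ZMod.natCast_rightInverse x
    rw [← h3, hx']
  · rintro rfl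
    show (W j).getD (((ML j - 1 : ℕ) : ZMod (mj j + 3))).val 0 = j + 1
    rw [ZMod.val_natCast, Nat.mod_eq_of_lt (by omega)]
    exact W_getD_last j

/-! ### Transfer of views between members of the family -/

lemma cc {i j : ℕ} (hij : i < j) {y : ℕ} (hy : y < j * ML i) :
    cj j ((S i j + y : ℕ) : ZMod (mj j + 3)) = cj i ((y : ℕ) : ZMod (mj i + 3)) := by
  show (W j).getD (((S i j + y : ℕ) : ZMod (mj j + 3))).val 0 =
    (W i).getD (((y : ℕ) : ZMod (mj i + 3))).val 0
  rw [ZMod.val_natCast, ZMod.val_natCast, mj_add, mj_add]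
  rw [Nat.mod_eq_of_lt (show S i j + y < ML j from by
    have := S_window hij
    omega)]
  exact run_getD hij y hy

def RR (i j : ℕ) (k : ℕ) (v : Fin (HH j).n) (u : Fin (HH i).n) : Prop :=
  ∃ (y : ℕ) (av : Fin (cj j ((S i j + y : ℕ) : ZMod (mj j + 3)) + 1))
    (au : Fin (cj i ((y : ℕ) : ZMod (mj i + 3)) + 1)),
    k ≤ y ∧ y + k < j * ML i ∧ av.val = au.val ∧
    v = cvE (mj j) (cj j) ⟨((S i j + y : ℕ) : ZMod (mj j + 3)), av⟩ ∧
    u = cvE (mj i) (cj i) ⟨((y : ℕ) : ZMod (mj i + 3)), au⟩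

theorem RR_view {i j : ℕ} (hij : i < j) :
    ∀ k v u, RR i j k v u → (HH j).augView k v = (HH i).augView k u := by
  apply sim_views
  · -- degrees agree
    rintro k v u ⟨y, av, au, h1, h2, h3, rfl, rfl⟩
    by_cases hav : av.val = 0
    · rw [sig_cy hav, sig_cy (show au.val = 0 by omega)]
      show (decCycle (mj j) (cj j)).degree _ = (decCycle (mj i) (cj i)).degree _
      rw [deg_cy, deg_cy, cc hij (by omega)]
    · show (decCycle (mj j) (cj j)).degree _ = (decCycle (mj i) (cj i)).degree _
      rw [deg_leaf hav, deg_leaf (show au.val ≠ 0 by omega)]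
  · rintro k v u ⟨y, av, au, h1, h2, h3, rfl, rfl⟩ p hp
    by_cases hav : av.val = 0
    · -- cycle node
      have hau : au.val = 0 := by omega
      have hdegv : (HH j).degree (cvE (mj j) (cj j)
          ⟨((S i j + y : ℕ) : ZMod (mj j + 3)), av⟩) =
          cj j ((S i j + y : ℕ) : ZMod (mj j + 3)) + 2 := by
        rw [sig_cy hav]
        exact deg_cy _
      rw [hdegv] at hp
      rw [sig_cy hav, sig_cy hau]
      by_cases hp0 : p = 0
      · -- forward step
        subst hp0
        have hposj : ((S i j + y : ℕ) : ZMod (mj j + 3)) + 1 =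
            ((S i j + (y+1) : ℕ) : ZMod (mj j + 3)) := by push_cast; ring
        have hposi : ((y : ℕ) : ZMod (mj i + 3)) + 1 =
            (((y+1 : ℕ)) : ZMod (mj i + 3)) := by push_cast; ring
        constructor
        · rw [dc_nbr_fwd, dc_nbr_fwd, decCycle_portNum, decCycle_portNum,
            pn_back_fwd, pn_back_fwd]
        · refine ⟨y + 1, ⟨0, Nat.succ_pos _⟩, ⟨0, Nat.succ_pos _⟩,
            by omega, by omega, rfl, ?_, ?_⟩
          · rw [dc_nbr_fwd, hposj]; rfl
          · rw [dc_nbr_fwd, hposi]; rfl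
      by_cases hp1 : p = 1
      · -- backward step
        subst hp1
        have hy1 : 1 ≤ y := by omega
        have hposj : ((S i j + y : ℕ) : ZMod (mj j + 3)) - 1 =
            ((S i j + (y-1) : ℕ) : ZMod (mj j + 3)) := by
          have h4 := congrArg (Nat.cast : ℕ → ZMod (mj j + 3))
            (show S i j + (y-1) + 1 = S i j + y from by omega)
          rw [Nat.cast_add_one] at h4
          rw [← h4]; ring
        have hposi : ((y : ℕ) : ZMod (mj i + 3)) - 1 =
            (((y-1 : ℕ)) : ZMod (mj i + 3)) := by
          have h4 := congrArg (Nat.cast : ℕ → ZMod (mj i + 3))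
            (show (y-1) + 1 = y from by omega)
          rw [Nat.cast_add_one] at h4
          rw [← h4]; ring
        constructor
        · rw [dc_nbr_bwd, dc_nbr_bwd, decCycle_portNum, decCycle_portNum,
            pn_back_bwd, pn_back_bwd]
        · refine ⟨y - 1, ⟨0, Nat.succ_pos _⟩, ⟨0, Nat.succ_pos _⟩,
            by omega, by omega, rfl, ?_, ?_⟩
          · rw [dc_nbr_bwd, hposj]; rfl
          · rw [dc_nbr_bwd, hposi]; rfl
      · -- step to a pendant leaf
        obtain ⟨p', rfl⟩ : ∃ p', p = p' + 1 + 1 := ⟨p - 2, by omega⟩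
        have hcc : cj j ((S i j + y : ℕ) : ZMod (mj j + 3)) =
            cj i ((y : ℕ) : ZMod (mj i + 3)) := cc hij (by omega)
        have hp' : p' + 1 < cj j ((S i j + y : ℕ) : ZMod (mj j + 3)) + 1 := by omega
        have hp'' : p' + 1 < cj i ((y : ℕ) : ZMod (mj i + 3)) + 1 := by omega
        have hnbrj : (HH j).nbr (cvE (mj j) (cj j)
            (cy (cj j) ((S i j + y : ℕ) : ZMod (mj j + 3)))) (p' + 1 + 1) =
            cvE (mj j) (cj j) ⟨((S i j + y : ℕ) : ZMod (mj j + 3)), ⟨p' + 1, hp'⟩⟩ :=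
          dc_nbr_leaf (k := ⟨p' + 1, hp'⟩) (by simp)
        have hnbri : (HH i).nbr (cvE (mj i) (cj i)
            (cy (cj i) ((y : ℕ) : ZMod (mj i + 3)))) (p' + 1 + 1) =
            cvE (mj i) (cj i) ⟨((y : ℕ) : ZMod (mj i + 3)), ⟨p' + 1, hp''⟩⟩ :=
          dc_nbr_leaf (k := ⟨p' + 1, hp''⟩) (by simp)
        constructor
        · rw [hnbrj, hnbri, decCycle_portNum, decCycle_portNum,
            pn_up (by simp), pn_up (by simp)]
        · refine ⟨y, ⟨p' + 1, hp'⟩, ⟨p' + 1, hp''⟩,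
            by omega, by omega, rfl, ?_, ?_⟩
          · rw [hnbrj]
          · rw [hnbri]
    · -- pendant leaf
      have hau : au.val ≠ 0 := by omega
      have hdegv : (HH j).degree (cvE (mj j) (cj j)
          ⟨((S i j + y : ℕ) : ZMod (mj j + 3)), av⟩) = 1 := deg_leaf hav
      rw [hdegv] at hp
      obtain rfl : p = 0 := by omega
      constructor
      · rw [dc_nbr_up hav, dc_nbr_up hau, decCycle_portNum, decCycle_portNum,
          pn_leaf hav, pn_leaf hau, h3]
      · refine ⟨y, ⟨0, Nat.succ_pos _⟩, ⟨0, Nat.succ_pos _⟩,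
          by omega, by omega, rfl, ?_, ?_⟩
        · rw [dc_nbr_up hav]; rfl
        · rw [dc_nbr_up hau]; rfl

theorem view_transfer {i j : ℕ} (hij : i < j) (k y : ℕ) (hk1 : k ≤ y)
    (hk2 : y + k < j * ML i) :
    (HH j).augView k (cvE (mj j) (cj j) (cy (cj j) ((S i j + y : ℕ) : ZMod (mj j + 3)))) =
    (HH i).augView k (cvE (mj i) (cj i) (cy (cj i) ((y : ℕ) : ZMod (mj i + 3)))) :=
  RR_view hij k _ _ ⟨y, ⟨0, Nat.succ_pos _⟩, ⟨0, Nat.succ_pos _⟩, hk1, hk2, rfl, rfl, rfl⟩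

end NoAdvice



open NoAdvice in
set_option maxHeartbeats 2000000 in
/-- No leader election algorithm using advice of size at most `b` succeeds on all
feasible port-numbered graphs, regardless of the allocated time. Here `f` maps the
advice and the current augmented truncated view either to `none` ("continue") or to an
output sequence of port numbers; `t v` is the first round at which node `v` stops. -/
theorem no_constant_advice (b : ℕ) :
    ¬ ∃ (A : PortGraph → List Bool)
        (f : List Bool → PortGraph.AugView → Option (List ℕ)),
      (∀ PG : PortGraph, PG.Feasible → (A PG).length ≤ b) ∧
      (∀ PG : PortGraph, PG.Feasible →
        ∃ (t : Fin PG.n → ℕ) (P : Fin PG.n → List ℕ),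
          (∀ v : Fin PG.n, f (A PG) (PG.augView (t v) v) = some (P v)) ∧
          (∀ v : Fin PG.n, ∀ s : ℕ, s < t v → f (A PG) (PG.augView s v) = none) ∧
          PG.IsLeaderElection P) := by
  rintro ⟨A, f, hlen, hrun⟩
  classical
  haveI : Finite {l : List Bool // l.length ≤ b} :=
    (List.finite_length_le Bool b).to_subtype
  let adv : ℕ → {l : List Bool // l.length ≤ b} :=
    fun n => ⟨A (HH n), hlen _ (HH_feasible n)⟩
  obtain ⟨a, ha⟩ := Finite.exists_infinite_fiber adv
  have hinf : (adv ⁻¹' {a}).Infinite := Set.infinite_coe_iff.mp ha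
  obtain ⟨i, hi⟩ := hinf.nonempty
  obtain ⟨t, P, h1, h2, h3⟩ := hrun (HH i) (HH_feasible i)
  obtain ⟨v, hv⟩ : ∃ v : Fin (HH i).n,
      v = cvE (mj i) (cj i) (cy (cj i) (0 : ZMod (mj i + 3))) := ⟨_, rfl⟩
  obtain ⟨τ, hτ⟩ : ∃ τ, τ = t v := ⟨_, rfl⟩
  obtain ⟨L, hL⟩ : ∃ L, L = P v := ⟨_, rfl⟩
  obtain ⟨K, hK⟩ : ∃ K, K = L.length := ⟨_, rfl⟩
  obtain ⟨r1, hr1⟩ : ∃ r1, r1 = τ + 2*K + 2 := ⟨_, rfl⟩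
  obtain ⟨j, hjmem, hjgt⟩ := hinf.exists_gt (i + 2*r1 + τ + 2*K + 7)
  have hij : i < j := by omega
  have hadv : A (HH j) = A (HH i) := by
    have e1 : adv j = a := Set.mem_singleton_iff.mp hjmem
    have e2 : adv i = a := Set.mem_singleton_iff.mp hi
    exact congrArg Subtype.val (e1.trans e2.symm)
  obtain ⟨t', P', h1', h2', h3'⟩ := hrun (HH j) (HH_feasible j)
  obtain ⟨lead, hlead⟩ := h3'
  obtain ⟨u, hu⟩ : ∃ u : ℕ → Fin (HH j).n, u = fun r =>
      cvE (mj j) (cj j) (cy (cj j) ((S i j + r * ML i : ℕ) : ZMod (mj j + 3))) := ⟨_, rfl⟩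
  have hMLi : 3 ≤ ML i := ML_ge3 i
  have hzero : ∀ r : ℕ, ((r * ML i : ℕ) : ZMod (mj i + 3)) = 0 := by
    intro r
    have hz : ((ML i : ℕ) : ZMod (mj i + 3)) = 0 := by
      rw [← mj_add i]
      exact ZMod.natCast_self _
    push_cast
    rw [hz]
    ring
  have viewEq : ∀ r, r1 ≤ r → r ≤ 2*r1 → ∀ s, s ≤ τ →
      (HH j).augView s (u r) = (HH i).augView s v := by
    intro r hra hrb s hs
    have h7 : τ ≤ τ * ML i := Nat.le_mul_of_pos_right τ (by omega)
    have h8 : (2*r1 + τ + 1) * ML i ≤ j * ML i :=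
      Nat.mul_le_mul_right (ML i) (by omega)
    have e1 : (2*r1 + τ + 1) * ML i = 2*r1*(ML i) + τ*(ML i) + ML i := by ring
    have h9 : r ≤ r * ML i := Nat.le_mul_of_pos_right r (by omega)
    have h10 : r * ML i ≤ 2*r1*(ML i) := by
      have := Nat.mul_le_mul_right (ML i) hrb
      omega
    have hk1 : s ≤ r * ML i := by omega
    have hk2 : r * ML i + s < j * ML i := by omega
    have hvt := view_transfer hij s (r * ML i) hk1 hk2
    rw [hzero r] at hvt
    rw [hu, hv]
    exact hvt
  have stopEq : ∀ r, r1 ≤ r → r ≤ 2*r1 → t' (u r) = τ ∧ P' (u r) = L := by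
    intro r hra hrb
    have hteq : t' (u r) = τ := by
      rcases lt_trichotomy (t' (u r)) τ with hlt | heq | hgt
      · exfalso
        have e1 := h1' (u r)
        rw [hadv, viewEq r hra hrb _ (le_of_lt hlt)] at e1
        rw [h2 v _ (hτ ▸ hlt)] at e1
        cases e1
      · exact heq
      · exfalso
        have e1 := h2' (u r) τ hgt
        rw [hadv, viewEq r hra hrb τ (le_refl τ), hτ, h1 v] at e1
        cases e1
    refine ⟨hteq, ?_⟩
    have e1 := h1' (u r)
    rw [hadv, hteq, viewEq r hra hrb τ (le_refl τ), hτ, h1 v] at e1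
    have e2 := Option.some.inj e1
    rw [← hL] at e2
    exact e2.symm
  obtain ⟨ht1, hP1⟩ := stopEq r1 (le_refl _) (by omega)
  obtain ⟨ht2, hP2⟩ := stopEq (2*r1) (by omega) (le_refl _)
  obtain ⟨vs1, hpath1, -, hlast1⟩ := hlead (u r1)
  obtain ⟨vs2, hpath2, -, hlast2⟩ := hlead (u (2*r1))
  rw [hP1] at hpath1
  rw [hP2] at hpath2
  obtain ⟨δ1, hd1, he1⟩ := isPath_pos hpath1 lead hlast1
  obtain ⟨δ2, hd2, he2⟩ := isPath_pos hpath2 lead hlast2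
  have hpos1 : posOf (u r1) = ((S i j + r1 * ML i : ℕ) : ZMod (mj j + 3)) := by
    rw [hu]
    exact posOf_cvE _
  have hpos2 : posOf (u (2*r1)) = ((S i j + 2*r1 * ML i : ℕ) : ZMod (mj j + 3)) := by
    rw [hu]
    exact posOf_cvE _
  have e1 : posOf (u r1) + (δ1 : ZMod (mj j + 3)) =
      posOf (u (2*r1)) + (δ2 : ZMod (mj j + 3)) := by
    rw [← he1, ← he2]
  rw [hpos1, hpos2] at e1
  have hzz : (((r1 : ℤ) * (ML i : ℤ) + δ2 - δ1 : ℤ) : ZMod (mj j + 3)) = 0 := by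
    push_cast at e1 ⊢
    linear_combination -e1
  have h01 : (r1 : ℤ) * (ML i : ℤ) = ((r1 * ML i : ℕ) : ℤ) := by push_cast; ring
  rw [h01, ZMod.intCast_zmod_eq_zero_iff_dvd] at hzz
  have hDlow : 3 * r1 ≤ r1 * ML i := by
    have := Nat.mul_le_mul_left r1 hMLi
    omega
  have hDhigh : r1 * ML i + 2*K < ML j := by
    have h5 : (r1 + 2*K + 1) * ML i ≤ j * ML i :=
      Nat.mul_le_mul_right (ML i) (by omega)
    have h6 : j * ML i < ML j := by
      have := S_window hij
      omega
    have e2 : (r1 + 2*K + 1) * ML i = r1 * ML i + 2*K*(ML i) + ML i := by ring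
    have h7 : 2*K ≤ 2*K*(ML i) := Nat.le_mul_of_pos_right _ (by omega)
    omega
  have hmlj : mj j + 3 = ML j := mj_add j
  rw [← hK] at hd1 hd2
  have hdvd := Int.le_of_dvd (by omega) hzz
  omega



end Election
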